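/- Let γ > 1, 0 < θ < θ' < 1, and c₀ > 0. Consider the Banach space B_θ of sequences ν = (ν_h)_{h ≤ 1} of complex numbers with norm ‖ν‖_θ = sup_{h≤1} γ^{−θh}|ν_h| < ∞. Suppose T : B_θ → B_θ is defined by T(ν)_h = −Σ_{j=h₀+1}^{h} γ^{−(h−j+1)} β_j(ν) (finite sum, h₀ ≤ h fixed) where the functions β_j satisfy |β_j(ν)| ≤ c₀ ε (Σ_{i=j}^{1} |ν_i| γ^{−θ'(i−j)} + γ^{θ' j}) for a parameter ε > 0. Then T maps the ball M_ξ = {ν : ‖ν‖_θ ≤ ξ·ε} into itself, provided ξ is large enough and ε small enough (depending on γ, θ, θ', c₀). -/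

import Mathlib

open Real Complex

lemma geomIcc_aux (r : ℝ) (h0 : 0 ≤ r) (h1 : r < 1) (a b : ℤ) :
    ∑ i ∈ Finset.Icc a b, r ^ (i - a).toNat ≤ (1 - r)⁻¹ := by
  have heq : ∑ i ∈ Finset.Icc a b, r ^ (i - a).toNat
      = ∑ k ∈ Finset.image (fun i => (i - a).toNat) (Finset.Icc a b), r ^ k := by
    rw [Finset.sum_image]
    intro x hx y hy hxy
    simp only [Finset.coe_Icc, Set.mem_Icc, Finset.mem_coe, Finset.mem_Icc] at hx hy hxy
    omega
  rw [heq]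
  exact sum_le_hasSum _ (fun i _ => pow_nonneg h0 i) (hasSum_geometric_of_lt_one h0 h1)

lemma geomIcc_aux' (r : ℝ) (h0 : 0 ≤ r) (h1 : r < 1) (a b : ℤ) :
    ∑ i ∈ Finset.Icc a b, r ^ (b - i).toNat ≤ (1 - r)⁻¹ := by
  have heq : ∑ i ∈ Finset.Icc a b, r ^ (b - i).toNat
      = ∑ k ∈ Finset.image (fun i => (b - i).toNat) (Finset.Icc a b), r ^ k := by
    rw [Finset.sum_image]
    intro x hx y hy hxy
    simp only [Finset.coe_Icc, Set.mem_Icc, Finset.mem_coe, Finset.mem_Icc] at hx hy hxy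
    omega
  rw [heq]
  exact sum_le_hasSum _ (fun i _ => pow_nonneg h0 i) (hasSum_geometric_of_lt_one h0 h1)

theorem stmt_6 (γ θ θ' c₀ : ℝ) (hγ : 1 < γ) (hθ : 0 < θ) (hθθ' : θ < θ') (hθ' : θ' < 1)
    (hc₀ : 0 < c₀) :
    ∃ ξ₀ > 0, ∃ ε₀ > 0, ∀ ξ : ℝ, ξ₀ ≤ ξ → ∀ ε : ℝ, 0 < ε → ε ≤ ε₀ →
      ∀ h₀ : ℤ, h₀ ≤ 1 →
        ∀ β : ℤ → (ℤ → ℂ) → ℂ, ∀ ν : ℤ → ℂ,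
          (∀ h : ℤ, h ≤ 1 → Norm.norm (ν h) ≤ ξ * ε * γ ^ (θ * (h : ℝ))) →
          (∀ j : ℤ, j ≤ 1 →
            Norm.norm (β j ν) ≤
              c₀ * ε *
                ((∑ i ∈ Finset.Icc j 1,
                    Norm.norm (ν i) * γ ^ (-(θ' * ((i : ℝ) - (j : ℝ))))) +
                  γ ^ (θ' * (j : ℝ)))) →
          ∀ h : ℤ, h₀ ≤ h → h ≤ 1 →
            Norm.norm
                (-(∑ j ∈ Finset.Icc (h₀ + 1) h,
                    ((γ ^ (-((h : ℝ) - (j : ℝ) + 1)) : ℝ) : ℂ) * β j ν)) ≤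
              ξ * ε * γ ^ (θ * (h : ℝ)) := by
  have hγ0 : (0:ℝ) < γ := lt_trans zero_lt_one hγ
  have hr₁ : γ ^ (θ - θ') < 1 := Real.rpow_lt_one_of_one_lt_of_neg hγ (by linarith)
  have hr₁0 : 0 ≤ γ ^ (θ - θ') := (Real.rpow_pos_of_pos hγ0 _).le
  have hr₂ : γ ^ (-(1 + θ)) < 1 := Real.rpow_lt_one_of_one_lt_of_neg hγ (by linarith)
  have hr₂0 : 0 ≤ γ ^ (-(1 + θ)) := (Real.rpow_pos_of_pos hγ0 _).le
  set C₁ := (1 - γ ^ (θ - θ'))⁻¹ with hC₁def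
  set C₂ := γ ^ (-1 : ℝ) * (1 - γ ^ (-(1 + θ)))⁻¹ with hC₂def
  have hC₁0 : 0 < C₁ := inv_pos.mpr (by linarith)
  have hC₂0 : 0 < C₂ := mul_pos (Real.rpow_pos_of_pos hγ0 _) (inv_pos.mpr (by linarith))
  have hG0 : 0 < γ ^ (θ' - θ) := Real.rpow_pos_of_pos hγ0 _
  refine ⟨2 * c₀ * C₂ * γ ^ (θ' - θ), by positivity, (2 * c₀ * C₂ * C₁)⁻¹, by positivity, ?_⟩
  intro ξ hξ ε hε hεε₀ h₀ hh₀ β ν hν hβ h hh₀h hh1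
  have hξ0 : 0 < ξ := lt_of_lt_of_le (by positivity) hξ
  -- Step 1 : improved bound on β
  have hβ' : ∀ j : ℤ, j ≤ 1 → Norm.norm (β j ν) ≤
      c₀ * ε * (ξ * ε * C₁ + γ ^ (θ' - θ)) * γ ^ (θ * (j : ℝ)) := by
    intro j hj
    have hsum : (∑ i ∈ Finset.Icc j 1, Norm.norm (ν i) * γ ^ (-(θ' * ((i : ℝ) - (j : ℝ))))) ≤
        ξ * ε * C₁ * γ ^ (θ * (j : ℝ)) := by
      calc ∑ i ∈ Finset.Icc j 1, Norm.norm (ν i) * γ ^ (-(θ' * ((i : ℝ) - (j : ℝ))))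
          ≤ ∑ i ∈ Finset.Icc j 1,
              (ξ * ε * γ ^ (θ * (j : ℝ))) * (γ ^ (θ - θ')) ^ (i - j).toNat := by
            apply Finset.sum_le_sum
            intro i hi
            obtain ⟨hij, hi1⟩ := Finset.mem_Icc.mp hi
            have hcast : ((i - j).toNat : ℝ) = (i : ℝ) - (j : ℝ) := by
              have := Int.toNat_of_nonneg (by omega : (0:ℤ) ≤ i - j)
              exact_mod_cast congrArg (Int.cast : ℤ → ℝ) this
            have h2 : γ ^ (θ * (i : ℝ)) * γ ^ (-(θ' * ((i : ℝ) - (j : ℝ))))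
                = γ ^ (θ * (j : ℝ)) * (γ ^ (θ - θ')) ^ (i - j).toNat := by
              rw [← Real.rpow_natCast (γ ^ (θ - θ')) _, ← Real.rpow_mul hγ0.le,
                ← Real.rpow_add hγ0, ← Real.rpow_add hγ0, hcast]
              ring_nf
            calc Norm.norm (ν i) * γ ^ (-(θ' * ((i : ℝ) - (j : ℝ))))
                ≤ (ξ * ε * γ ^ (θ * (i : ℝ))) * γ ^ (-(θ' * ((i : ℝ) - (j : ℝ)))) :=
                  mul_le_mul_of_nonneg_right (hν i hi1) (Real.rpow_nonneg hγ0.le _)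
              _ = (ξ * ε) * (γ ^ (θ * (i : ℝ)) * γ ^ (-(θ' * ((i : ℝ) - (j : ℝ))))) := by ring
              _ = (ξ * ε * γ ^ (θ * (j : ℝ))) * (γ ^ (θ - θ')) ^ (i - j).toNat := by
                  rw [h2]; ring
        _ = (ξ * ε * γ ^ (θ * (j : ℝ))) * ∑ i ∈ Finset.Icc j 1, (γ ^ (θ - θ')) ^ (i - j).toNat := by
            rw [Finset.mul_sum]
        _ ≤ (ξ * ε * γ ^ (θ * (j : ℝ))) * C₁ := by
            apply mul_le_mul_of_nonneg_left (geomIcc_aux _ hr₁0 hr₁ j 1)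
            positivity
        _ = ξ * ε * C₁ * γ ^ (θ * (j : ℝ)) := by ring
    have hpow : γ ^ (θ' * (j : ℝ)) ≤ γ ^ (θ' - θ) * γ ^ (θ * (j : ℝ)) := by
      rw [← Real.rpow_add hγ0]
      apply Real.rpow_le_rpow_of_exponent_le hγ.le
      have hj' : (j : ℝ) ≤ 1 := by exact_mod_cast hj
      nlinarith
    calc Norm.norm (β j ν) ≤ c₀ * ε *
        ((∑ i ∈ Finset.Icc j 1, Norm.norm (ν i) * γ ^ (-(θ' * ((i : ℝ) - (j : ℝ))))) +
          γ ^ (θ' * (j : ℝ))) := hβ j hj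
      _ ≤ c₀ * ε * (ξ * ε * C₁ * γ ^ (θ * (j : ℝ)) + γ ^ (θ' - θ) * γ ^ (θ * (j : ℝ))) := by
          apply mul_le_mul_of_nonneg_left (add_le_add hsum hpow) (by positivity)
      _ = c₀ * ε * (ξ * ε * C₁ + γ ^ (θ' - θ)) * γ ^ (θ * (j : ℝ)) := by ring
  -- Step 2 : bound the sum
  set K := ξ * ε * C₁ + γ ^ (θ' - θ) with hKdef
  have hK0 : 0 < K := by positivity
  rw [norm_neg]
  calc Norm.norm (∑ j ∈ Finset.Icc (h₀ + 1) h,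
          ((γ ^ (-((h : ℝ) - (j : ℝ) + 1)) : ℝ) : ℂ) * β j ν)
      ≤ ∑ j ∈ Finset.Icc (h₀ + 1) h,
          Norm.norm (((γ ^ (-((h : ℝ) - (j : ℝ) + 1)) : ℝ) : ℂ) * β j ν) :=
        norm_sum_le _ _
    _ ≤ ∑ j ∈ Finset.Icc (h₀ + 1) h,
          (c₀ * ε * K * γ ^ (θ * (h : ℝ)) * γ ^ (-1 : ℝ)) * (γ ^ (-(1 + θ))) ^ (h - j).toNat := by
        apply Finset.sum_le_sum
        intro j hjmem
        obtain ⟨hj1, hjh⟩ := Finset.mem_Icc.mp hjmem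
        have hj1' : j ≤ 1 := le_trans hjh hh1
        have hcast : ((h - j).toNat : ℝ) = (h : ℝ) - (j : ℝ) := by
          have := Int.toNat_of_nonneg (by omega : (0:ℤ) ≤ h - j)
          exact_mod_cast congrArg (Int.cast : ℤ → ℝ) this
        have habs : Norm.norm (((γ ^ (-((h : ℝ) - (j : ℝ) + 1)) : ℝ) : ℂ) * β j ν)
            = γ ^ (-((h : ℝ) - (j : ℝ) + 1)) * Norm.norm (β j ν) := by
          rw [norm_mul, Complex.norm_real, Real.norm_eq_abs, _root_.abs_of_nonneg (Real.rpow_nonneg hγ0.le _)]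
        rw [habs]
        have h2 : γ ^ (-((h : ℝ) - (j : ℝ) + 1)) * γ ^ (θ * (j : ℝ))
            = (γ ^ (θ * (h : ℝ)) * γ ^ (-1 : ℝ)) * (γ ^ (-(1 + θ))) ^ (h - j).toNat := by
          rw [← Real.rpow_natCast (γ ^ (-(1 + θ))) _, ← Real.rpow_mul hγ0.le, hcast,
            ← Real.rpow_add hγ0, ← Real.rpow_add hγ0, ← Real.rpow_add hγ0]
          congr 1
          ring
        calc γ ^ (-((h : ℝ) - (j : ℝ) + 1)) * Norm.norm (β j ν)
            ≤ γ ^ (-((h : ℝ) - (j : ℝ) + 1)) * (c₀ * ε * K * γ ^ (θ * (j : ℝ))) :=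
              mul_le_mul_of_nonneg_left (hβ' j hj1') (Real.rpow_nonneg hγ0.le _)
          _ = (c₀ * ε * K) * (γ ^ (-((h : ℝ) - (j : ℝ) + 1)) * γ ^ (θ * (j : ℝ))) := by ring
          _ = (c₀ * ε * K * γ ^ (θ * (h : ℝ)) * γ ^ (-1 : ℝ)) * (γ ^ (-(1 + θ))) ^ (h - j).toNat := by
              rw [h2]; ring
    _ = (c₀ * ε * K * γ ^ (θ * (h : ℝ)) * γ ^ (-1 : ℝ)) *
          ∑ j ∈ Finset.Icc (h₀ + 1) h, (γ ^ (-(1 + θ))) ^ (h - j).toNat := by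
        rw [Finset.mul_sum]
    _ ≤ (c₀ * ε * K * γ ^ (θ * (h : ℝ)) * γ ^ (-1 : ℝ)) * (1 - γ ^ (-(1 + θ)))⁻¹ := by
        apply mul_le_mul_of_nonneg_left (geomIcc_aux' _ hr₂0 hr₂ (h₀ + 1) h)
        positivity
    _ = (c₀ * ε * K * C₂) * γ ^ (θ * (h : ℝ)) := by rw [hC₂def]; ring
    _ ≤ ξ * ε * γ ^ (θ * (h : ℝ)) := by
        apply mul_le_mul_of_nonneg_right _ (Real.rpow_nonneg hγ0.le _)
        have hε₀ : ε * (2 * c₀ * C₂ * C₁) ≤ 1 := by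
          calc ε * (2 * c₀ * C₂ * C₁) ≤ (2 * c₀ * C₂ * C₁)⁻¹ * (2 * c₀ * C₂ * C₁) :=
            mul_le_mul_of_nonneg_right hεε₀ (by positivity)
          _ = 1 := inv_mul_cancel₀ (by positivity)
        have h2 : c₀ * C₂ * γ ^ (θ' - θ) ≤ ξ / 2 := by linarith
        rw [hKdef]
        nlinarith [mul_pos hξ0 hε]
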